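/- For thermal eigenvalues λ_m = n_e^m/(1+n_e)^{m+1} (environment mean photon number n_e > 0) and TMSV coefficients c_n² = n_p^n/(1+n_p)^{n+1} (probe mean photon number n_p > 0), one has (1/(4 n_e)) ∑_n (n+1) M(c_n², (n_e/(1+n_e)) c_{n+1}²) = n_p (1+n_e) / (1 + n_e + √(n_e n_p (1+n_e)/(1+n_p)))², where M(x,y) = 4xy/(√x+√y)². -/

import Mathlib

/-- The mean function M(x,y) = 4xy/(√x+√y)². -/
noncomputable def meanM (x y : ℝ) : ℝ := 4 * x * y / (Real.sqrt x + Real.sqrt y) ^ 2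

lemma meanM_scale (x t : ℝ) (hx : 0 < x) (ht : 0 ≤ t) :
    meanM x (t * x) = 4 * t * x / (1 + Real.sqrt t) ^ 2 := by
  unfold meanM
  rw [Real.sqrt_mul ht x]
  have hsx : 0 < Real.sqrt x := Real.sqrt_pos.mpr hx
  have hst : 0 ≤ Real.sqrt t := Real.sqrt_nonneg t
  have h1 : Real.sqrt x + Real.sqrt t * Real.sqrt x
      = (1 + Real.sqrt t) * Real.sqrt x := by ring
  rw [h1, mul_pow, Real.sq_sqrt hx.le]
  have h2 : (0:ℝ) < (1 + Real.sqrt t) ^ 2 := by positivity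
  field_simp

/-- Closed form of the quantum Chernoff exponent coefficient G/(4n_e) for the
    TMSV probe in a thermal environment. -/
theorem tmsv_chernoff_coefficient (ne np : ℝ) (hne : 0 < ne) (hnp : 0 < np) :
    (1 / (4 * ne)) * ∑' n : ℕ,
      ((n : ℝ) + 1) * meanM (np ^ n / (1 + np) ^ (n + 1))
        ((ne / (1 + ne)) * (np ^ (n + 1) / (1 + np) ^ (n + 2)))
    = np * (1 + ne)
        / (1 + ne + Real.sqrt (ne * np * (1 + ne) / (1 + np))) ^ 2 := by
  have hnp1 : (0:ℝ) < 1 + np := by linarith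
  have hne1 : (0:ℝ) < 1 + ne := by linarith
  set r := np / (1 + np) with hr
  have hr0 : 0 < r := div_pos hnp hnp1
  have hr1 : r < 1 := (div_lt_one hnp1).mpr (by linarith)
  set t := ne * np / ((1 + ne) * (1 + np)) with htdef
  have ht0 : 0 < t := by positivity
  set s := Real.sqrt t with hs
  have hs0 : 0 ≤ s := Real.sqrt_nonneg _
  -- each term in closed form
  have hterm : ∀ n : ℕ,
      ((n : ℝ) + 1) * meanM (np ^ n / (1 + np) ^ (n + 1))
        ((ne / (1 + ne)) * (np ^ (n + 1) / (1 + np) ^ (n + 2)))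
      = (4 * t / ((1 + s) ^ 2 * (1 + np))) * (((n : ℝ) + 1) * r ^ n) := by
    intro n
    have hx : (0:ℝ) < np ^ n / (1 + np) ^ (n + 1) := by positivity
    have hy : (ne / (1 + ne)) * (np ^ (n + 1) / (1 + np) ^ (n + 2))
        = t * (np ^ n / (1 + np) ^ (n + 1)) := by
      rw [htdef]
      field_simp
      ring
    rw [hy, meanM_scale _ _ hx ht0.le, ← hs]
    have hrx : np ^ n / (1 + np) ^ (n + 1) = r ^ n / (1 + np) := by
      rw [hr, div_pow, pow_succ]
      field_simp
    rw [hrx]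
    have e1 : (1 + s) ≠ 0 := by positivity
    have e2 : (1 + np) ≠ 0 := hnp1.ne'
    field_simp
  -- the geometric-type sum
  have hnorm : ‖r‖ < 1 := by rw [Real.norm_eq_abs, abs_of_pos hr0]; exact hr1
  have h1r : (0:ℝ) < 1 - r := by linarith
  have hsum1 : HasSum (fun n : ℕ => (n : ℝ) * r ^ n) (r / (1 - r) ^ 2) :=
    hasSum_coe_mul_geometric_of_norm_lt_one hnorm
  have hsum2 : HasSum (fun n : ℕ => r ^ n) (1 / (1 - r)) := by
    simpa [one_div] using hasSum_geometric_of_lt_one hr0.le hr1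
  have hsum : HasSum (fun n : ℕ => ((n : ℝ) + 1) * r ^ n) (1 / (1 - r) ^ 2) := by
    have h := hsum1.add hsum2
    have heq : r / (1 - r) ^ 2 + 1 / (1 - r) = 1 / (1 - r) ^ 2 := by
      field_simp
      ring
    rw [heq] at h
    simpa [add_mul] using h
  have htsum : ∑' n : ℕ,
      ((n : ℝ) + 1) * meanM (np ^ n / (1 + np) ^ (n + 1))
        ((ne / (1 + ne)) * (np ^ (n + 1) / (1 + np) ^ (n + 2)))
      = (4 * t / ((1 + s) ^ 2 * (1 + np))) * (1 / (1 - r) ^ 2) := by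
    rw [tsum_congr hterm]
    exact (hsum.mul_left _).tsum_eq
  rw [htsum]
  -- simplify 1 - r and the square root
  have h1r' : 1 - r = 1 / (1 + np) := by
    rw [hr]; field_simp; ring
  have hroot : Real.sqrt (ne * np * (1 + ne) / (1 + np)) = (1 + ne) * s := by
    have : ne * np * (1 + ne) / (1 + np) = (1 + ne) ^ 2 * t := by
      rw [htdef]; field_simp
    rw [this, hs, Real.sqrt_mul (by positivity), Real.sqrt_sq hne1.le]
  rw [h1r', hroot, htdef]
  have hs1 : (0:ℝ) < 1 + s := by linarith
  field_simp
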